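/- Fix p ∈ F with p ≠ 0 and p ≠ 1, and let a, a* ∈ L = sl₂(F) be the matrices a = [[1−2p, 2(1−p)],[2p, 2p−1]] and a* = [[1,0],[0,−1]], and let W = diag(1−p, p). Then the map L → L, y ↦ W yᵗ W⁻¹ is the unique antiautomorphism of L that fixes both a and a*. -/

import Mathlib

open Matrix LieAlgebra.SpecialLinear

section helpers

variable {F : Type*} [Field F]

private lemma tr2 (a b c d : F) : (!![a,b;c,d])ᵀ = !![a,c;b,d] := by
  ext i j; fin_cases i <;> fin_cases j <;> rfl

private lemma smul2 (r a b c d : F) :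
    r • (!![a,b;c,d] : Matrix (Fin 2) (Fin 2) F) = !![r*a,r*b;r*c,r*d] := by
  ext i j; fin_cases i <;> fin_cases j <;> simp [Matrix.smul_apply]

private lemma add2 (a b c d e f g h : F) :
    (!![a,b;c,d] : Matrix (Fin 2) (Fin 2) F) + !![e,f;g,h] = !![a+e,b+f;c+g,d+h] := by
  ext i j; fin_cases i <;> fin_cases j <;> simp

private lemma sub2 (a b c d e f g h : F) :
    (!![a,b;c,d] : Matrix (Fin 2) (Fin 2) F) - !![e,f;g,h] = !![a-e,b-f;c-g,d-h] := by
  ext i j; fin_cases i <;> fin_cases j <;> simp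

private lemma one2 : (1 : Matrix (Fin 2) (Fin 2) F) = !![1,0;0,1] := by
  ext i j; fin_cases i <;> fin_cases j <;> simp [Matrix.one_apply]

private lemma mk2_congr {a b c d a' b' c' d' : F} (h1 : a = a') (h2 : b = b')
    (h3 : c = c') (h4 : d = d') :
    (!![a,b;c,d] : Matrix (Fin 2) (Fin 2) F) = !![a',b';c',d'] := by
  rw [h1, h2, h3, h4]

end helpers

/-- Fix `p ∈ F` with `p ≠ 0`, `p ≠ 1`.  Let `a = [[1−2p, 2(1−p)],[2p, 2p−1]]` and
`a* = diag(1,−1)` in `L = sl₂(F)`, and let `W = diag(1−p, p)`.  Then the map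
`y ↦ W yᵗ W⁻¹` is the unique antiautomorphism of `L` fixing both `a` and `a*`:
there is an antiautomorphism `σ` of `L` given by `σ y = W yᵗ W⁻¹`, it fixes `a` and `a*`,
and any antiautomorphism of `L` fixing `a` and `a*` is equal to `σ`. -/
theorem stmt10 (F : Type*) [Field F] [IsAlgClosed F] (hchar : (2 : F) ≠ 0)
    (p : F) (hp0 : p ≠ 0) (hp1 : p ≠ 1)
    (a as : sl (Fin 2) F)
    (ha : (a : Matrix (Fin 2) (Fin 2) F) = !![1 - 2 * p, 2 * (1 - p); 2 * p, 2 * p - 1])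
    (has : (as : Matrix (Fin 2) (Fin 2) F) = !![(1 : F), 0; 0, -1])
    (W : Matrix (Fin 2) (Fin 2) F)
    (hW : W = !![1 - p, 0; 0, p]) :
    ∃ σ : sl (Fin 2) F ≃ₗ[F] sl (Fin 2) F,
      (∀ y : sl (Fin 2) F,
          ((σ y : Matrix (Fin 2) (Fin 2) F)) = W * (y : Matrix (Fin 2) (Fin 2) F)ᵀ * W⁻¹) ∧
      (∀ y z : sl (Fin 2) F, σ ⁅y, z⁆ = ⁅σ z, σ y⁆) ∧
      σ a = a ∧ σ as = as ∧
      ∀ τ : sl (Fin 2) F ≃ₗ[F] sl (Fin 2) F,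
        (∀ y z : sl (Fin 2) F, τ ⁅y, z⁆ = ⁅τ z, τ y⁆) → τ a = a → τ as = as →
        ∀ y : sl (Fin 2) F, τ y = σ y := by
  have hp1' : (1 : F) - p ≠ 0 := sub_ne_zero.mpr (Ne.symm hp1)
  have h4 : (4 : F) ≠ 0 := by
    intro h
    exact hchar (mul_self_eq_zero.mp (by rw [show (2:F)*2 = 4 by norm_num, h]))
  have h8 : (8 : F) ≠ 0 := by
    intro h
    apply hchar
    have h2 : (2:F) * 4 = 0 := by rw [show (2:F)*4 = 8 by norm_num, h]
    rcases mul_eq_zero.mp h2 with h2' | h4'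
    · exact h2'
    · exact absurd h4' h4
  set V : Matrix (Fin 2) (Fin 2) F := !![(1-p)⁻¹, 0; 0, p⁻¹] with hV
  have hWV : W * V = 1 := by
    rw [hW, hV, Matrix.mul_fin_two, one2]
    refine mk2_congr ?_ ?_ ?_ ?_ <;> field_simp <;> ring
  have hVW : V * W = 1 := by
    rw [hW, hV, Matrix.mul_fin_two, one2]
    refine mk2_congr ?_ ?_ ?_ ?_ <;> field_simp <;> ring
  have hWinv : W⁻¹ = V := Matrix.inv_eq_right_inv hWV
  have hVt : Vᵀ = V := by rw [hV, tr2]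
  have hWt : Wᵀ = W := by rw [hW, tr2]
  -- the underlying map
  have hmem : ∀ y : sl (Fin 2) F, W * (y.val)ᵀ * V ∈ sl (Fin 2) F := by
    intro y
    show Matrix.trace (W * (y.val)ᵀ * V) = 0
    rw [Matrix.trace_mul_cycle, hVW, Matrix.one_mul, Matrix.trace_transpose]
    exact y.2
  set σL : sl (Fin 2) F →ₗ[F] sl (Fin 2) F :=
    { toFun := fun y => ⟨W * (y.val)ᵀ * V, hmem y⟩
      map_add' := by
        intro y z
        apply Subtype.ext
        show W * (y.val + z.val)ᵀ * V = W * (y.val)ᵀ * V + W * (z.val)ᵀ * V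
        rw [Matrix.transpose_add, Matrix.mul_add, Matrix.add_mul]
      map_smul' := by
        intro c y
        apply Subtype.ext
        show W * (c • y.val)ᵀ * V = c • (W * (y.val)ᵀ * V)
        rw [Matrix.transpose_smul, Matrix.mul_smul, Matrix.smul_mul] } with hσL
  have hinv : ∀ y : sl (Fin 2) F, σL (σL y) = y := by
    intro y
    apply Subtype.ext
    show W * (W * (y.val)ᵀ * V)ᵀ * V = y.val
    rw [Matrix.transpose_mul, Matrix.transpose_mul, Matrix.transpose_transpose, hVt, hWt]
    simp only [Matrix.mul_assoc]
    rw [hWV, Matrix.mul_one, ← Matrix.mul_assoc, hWV, Matrix.one_mul]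
  set σ : sl (Fin 2) F ≃ₗ[F] sl (Fin 2) F :=
    LinearEquiv.ofLinear σL σL (LinearMap.ext fun y => hinv y)
      (LinearMap.ext fun y => hinv y) with hσ
  have hσcoe : ∀ y : sl (Fin 2) F,
      ((σ y : Matrix (Fin 2) (Fin 2) F)) = W * (y : Matrix (Fin 2) (Fin 2) F)ᵀ * W⁻¹ := by
    intro y; rw [hWinv]; rfl
  have key : ∀ A B : Matrix (Fin 2) (Fin 2) F, (W*A*V)*(W*B*V) = W*(A*B)*V := by
    intro A B
    simp only [Matrix.mul_assoc]
    rw [← Matrix.mul_assoc V W (B*V), hVW, Matrix.one_mul]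
  have hanti : ∀ y z : sl (Fin 2) F, σ ⁅y, z⁆ = ⁅σ z, σ y⁆ := by
    intro y z
    apply Subtype.ext
    show W * (y.val * z.val - z.val * y.val)ᵀ * V
      = (W * (z.val)ᵀ * V) * (W * (y.val)ᵀ * V) - (W * (y.val)ᵀ * V) * (W * (z.val)ᵀ * V)
    rw [key, key, Matrix.transpose_sub, Matrix.transpose_mul, Matrix.transpose_mul,
      Matrix.mul_sub, Matrix.sub_mul]
  have hσa : σ a = a := by
    apply Subtype.ext
    show W * (a.val)ᵀ * V = a.val
    rw [ha, hW, hV, tr2, Matrix.mul_fin_two, Matrix.mul_fin_two]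
    refine mk2_congr ?_ ?_ ?_ ?_ <;> field_simp <;> ring
  have hσas : σ as = as := by
    apply Subtype.ext
    show W * (as.val)ᵀ * V = as.val
    rw [has, hW, hV, tr2, Matrix.mul_fin_two, Matrix.mul_fin_two]
    refine mk2_congr ?_ ?_ ?_ ?_ <;> field_simp <;> ring
  refine ⟨σ, hσcoe, hanti, hσa, hσas, ?_⟩
  intro τ hτ hτa hτas y
  set b : sl (Fin 2) F := ⁅as, a⁆ with hb
  have hbval : b.val = !![0, 4*(1-p); -(4*p), 0] := by
    show as.val * a.val - a.val * as.val = _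
    rw [ha, has, Matrix.mul_fin_two, Matrix.mul_fin_two, sub2]
    refine mk2_congr ?_ ?_ ?_ ?_ <;> ring
  have hτb : τ b = -b := by
    rw [hb, hτ as a, hτa, hτas, ← lie_skew]
  have hσb : σ b = -b := by
    rw [hb, hanti as a, hσa, hσas, ← lie_skew]
  have htr : y.val 1 1 = -(y.val 0 0) := by
    have h : Matrix.trace y.val = 0 := y.2
    rw [Matrix.trace_fin_two] at h
    exact eq_neg_of_add_eq_zero_right h
  obtain ⟨c1, c2, c3, hdec⟩ : ∃ c1 c2 c3 : F, y = c1 • as + c2 • a + c3 • b := by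
    refine ⟨y.val 0 0 - ((y.val 0 1*p + y.val 1 0*(1-p))/(4*p*(1-p)))*(1-2*p),
      (y.val 0 1*p + y.val 1 0*(1-p))/(4*p*(1-p)),
      (y.val 0 1*p - y.val 1 0*(1-p))/(8*p*(1-p)), ?_⟩
    apply Subtype.ext
    show y.val = _ • as.val + _ • a.val + _ • b.val
    conv_lhs => rw [Matrix.eta_fin_two y.val]
    rw [htr, has, ha, hbval, smul2, smul2, smul2, add2, add2]
    refine mk2_congr ?_ ?_ ?_ ?_ <;> field_simp <;> ring
  rw [hdec]
  simp only [map_add, _root_.map_smul, hτa, hτas, hτb, hσa, hσas, hσb]
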